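/- Ignition-condition induction (abstract ODE lemma): suppose (ι₁,…,ι_K, λ₁,…,λ_K, a₁⁻,…,a_K⁻, a₁⁺,…,a_K⁺) satisfies the ignition condition with parameters (c₁, c₂, C₂) on a time interval I, and that for all t ∈ I, ((ι₁ι₂+1)/2)·(λ₁(t)/λ₂(t)) + a₁⁻(t)² + a₁⁺(t)² ≤ (1/2)min(1,c₂)·d_par(t)². Then (ι₂,…,ι_K, λ₂,…,λ_K, a₂⁻,…,a_K⁻, a₂⁺,…,a_K⁺) satisfies the ignition condition with parameters (2c₁, (1/2)min(1,c₂), 2C₂) on I. -/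

import Mathlib

open Set

/-- The parameter proximity function `d_par`, built from the scale ratios of
same-sign neighbouring bubbles and the stable/unstable components. -/
noncomputable def dpar (K : ℕ) (ι : ℕ → ℝ) (lam am ap : ℕ → ℝ → ℝ) (t : ℝ) : ℝ :=
  Real.sqrt
    ((∑ i ∈ Finset.Icc 1 (K - 1), if ι i = ι (i + 1) then lam i t / lam (i + 1) t else 0)
      + ∑ i ∈ Finset.Icc 1 K, ((ap i t) ^ 2 + (am i t) ^ 2))

/-- The ignition condition with parameters `c₁, c₂, C₂` on the time interval `I`
(Definition of "ignition condition": for any subinterval `[t₁,t₂] ⊆ I`, any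
`t₀ ∈ [t₁,t₂]` and any index `j ∈ {1,…,K}` satisfying one of the two pairs of
conditions, at least one of the two integral bounds holds).  The convention
`λ₀ = 0` is encoded by requiring `2 ≤ j` in the second alternative. -/
def IgnitionCondition (K : ℕ) (ι : ℕ → ℝ) (lam am ap : ℕ → ℝ → ℝ)
    (I : Set ℝ) (c₁ c₂ C₂ : ℝ) : Prop :=
  ∀ t₁ t₂ : ℝ, t₁ ≤ t₂ → Set.Icc t₁ t₂ ⊆ I →
    ∀ t₀ ∈ Set.Icc t₁ t₂, ∀ j : ℕ, 1 ≤ j → j ≤ K →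
    ((((∀ t ∈ Set.Icc t₁ t₂,
          (∑ i ∈ Finset.Icc 1 (K - 1),
              if ι i = ι (i + 1) ∧ i < j then lam i t / lam (i + 1) t else 0)
            + ∑ i ∈ Finset.Icc 1 (j - 1), ((ap i t) ^ 2 + (am i t) ^ 2)
          ≤ c₂ * (dpar K ι lam am ap t) ^ 2)
        ∧ c₁ * (dpar K ι lam am ap t₀) ^ 2 ≤ (ap j t₀) ^ 2 + (am j t₀) ^ 2)
      ∨ ((∀ t ∈ Set.Icc t₁ t₂,
          (∑ i ∈ Finset.Icc 1 (K - 1),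
              if ι i = ι (i + 1) ∧ i < j - 1 then lam i t / lam (i + 1) t else 0)
            + ∑ i ∈ Finset.Icc 1 (j - 1), ((ap i t) ^ 2 + (am i t) ^ 2)
          ≤ c₂ * (dpar K ι lam am ap t) ^ 2)
        ∧ 2 ≤ j
        ∧ c₁ * (dpar K ι lam am ap t₀) ^ 2
            ≤ ι (j - 1) * ι j * (lam (j - 1) t₀ / lam j t₀))) →
      ((∫ t in t₁..t₀, dpar K ι lam am ap t)
          ≤ C₂ * dpar K ι lam am ap t₁ * lam K t₁
        ∨ (∫ t in t₀..t₂, dpar K ι lam am ap t)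
          ≤ C₂ * dpar K ι lam am ap t₂ * lam K t₂))

/- ------------------------------------------------------------------ -/
/- Auxiliary lemmas -/

lemma icc_one_eq_insert (n : ℕ) (hn : 1 ≤ n) :
    Finset.Icc 1 n = insert 1 (Finset.Icc 2 n) := by
  ext x; simp only [Finset.mem_Icc, Finset.mem_insert]; omega

lemma sum_shift_one' (n m : ℕ) (h : m = n + 1) (g : ℕ → ℝ) :
    ∑ i ∈ Finset.Icc 1 n, g (i + 1) = ∑ i ∈ Finset.Icc 2 m, g i := by
  subst h
  rw [show Finset.Icc 2 (n+1) = (Finset.Icc 1 n).map (addRightEmbedding 1) from by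
    rw [Finset.map_add_right_Icc]]
  rw [Finset.sum_map]
  rfl

lemma split_sum (n : ℕ) (hn : 1 ≤ n) (g : ℕ → ℝ) :
    ∑ i ∈ Finset.Icc 1 n, g i = g 1 + ∑ i ∈ Finset.Icc 1 (n - 1), g (i + 1) := by
  rw [sum_shift_one' (n-1) n (by omega) g, icc_one_eq_insert n hn, Finset.sum_insert (by simp)]

noncomputable def Spar (K : ℕ) (ι : ℕ → ℝ) (lam am ap : ℕ → ℝ → ℝ) (t : ℝ) : ℝ :=
  (∑ i ∈ Finset.Icc 1 (K - 1), if ι i = ι (i + 1) then lam i t / lam (i + 1) t else 0)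
    + ∑ i ∈ Finset.Icc 1 K, ((ap i t) ^ 2 + (am i t) ^ 2)

lemma Spar_nonneg (K : ℕ) (ι : ℕ → ℝ) (lam am ap : ℕ → ℝ → ℝ) (t : ℝ)
    (h : ∀ j, 1 ≤ j → j ≤ K → 0 < lam j t) : 0 ≤ Spar K ι lam am ap t := by
  apply add_nonneg
  · apply Finset.sum_nonneg
    intro i hi
    rw [Finset.mem_Icc] at hi
    split_ifs
    · exact div_nonneg (h i hi.1 (by omega)).le (h (i+1) (by omega) (by omega)).le
    · exact le_rfl
  · apply Finset.sum_nonneg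
    intro i _
    positivity

lemma dpar_sq (K : ℕ) (ι : ℕ → ℝ) (lam am ap : ℕ → ℝ → ℝ) (t : ℝ)
    (h : ∀ j, 1 ≤ j → j ≤ K → 0 < lam j t) :
    dpar K ι lam am ap t ^ 2 = Spar K ι lam am ap t :=
  Real.sq_sqrt (Spar_nonneg K ι lam am ap t h)

lemma Spar_split (K : ℕ) (hK : 2 ≤ K) (ι : ℕ → ℝ) (lam am ap : ℕ → ℝ → ℝ) (t : ℝ) :
    Spar K ι lam am ap t
      = ((if ι 1 = ι 2 then lam 1 t / lam 2 t else 0) + ((ap 1 t) ^ 2 + (am 1 t) ^ 2))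
        + Spar (K - 1) (fun i => ι (i + 1)) (fun i => lam (i + 1)) (fun i => am (i + 1))
            (fun i => ap (i + 1)) t := by
  simp only [Spar]
  rw [split_sum (K-1) (by omega), split_sum K (by omega)]
  ring

lemma dpar_contOn (K : ℕ) (ι : ℕ → ℝ) (lam am ap : ℕ → ℝ → ℝ) (I : Set ℝ)
    (hlam_pos : ∀ j, 1 ≤ j → j ≤ K → ∀ t ∈ I, 0 < lam j t)
    (hlam_cont : ∀ j, 1 ≤ j → j ≤ K → ContinuousOn (lam j) I)
    (ham_cont : ∀ j, 1 ≤ j → j ≤ K → ContinuousOn (am j) I)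
    (hap_cont : ∀ j, 1 ≤ j → j ≤ K → ContinuousOn (ap j) I) :
    ContinuousOn (dpar K ι lam am ap) I := by
  apply ContinuousOn.sqrt
  apply ContinuousOn.add
  · apply continuousOn_finset_sum
    intro i hi
    rw [Finset.mem_Icc] at hi
    split_ifs
    · exact (hlam_cont i hi.1 (by omega)).div (hlam_cont (i+1) (by omega) (by omega))
        (fun t ht => (hlam_pos (i+1) (by omega) (by omega) t ht).ne')
    · exact continuousOn_const
  · apply continuousOn_finset_sum
    intro i hi
    rw [Finset.mem_Icc] at hi
    exact ((hap_cont i hi.1 hi.2).pow 2).add ((ham_cont i hi.1 hi.2).pow 2)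

lemma head_split (K m j : ℕ) (hK : 2 ≤ K) (hj : 1 ≤ j) (hm : 1 < m)
    (ι : ℕ → ℝ) (lam am ap : ℕ → ℝ → ℝ) (t : ℝ) :
    (∑ i ∈ Finset.Icc 1 (K - 1), if ι i = ι (i + 1) ∧ i < m then lam i t / lam (i + 1) t else 0)
      + ∑ i ∈ Finset.Icc 1 j, ((ap i t) ^ 2 + (am i t) ^ 2)
    = ((if ι 1 = ι 2 then lam 1 t / lam 2 t else 0) + ((ap 1 t) ^ 2 + (am 1 t) ^ 2))
      + ((∑ i ∈ Finset.Icc 1 (K - 1 - 1),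
            if ι (i + 1) = ι (i + 1 + 1) ∧ i + 1 < m then lam (i + 1) t / lam (i + 1 + 1) t else 0)
        + ∑ i ∈ Finset.Icc 1 (j - 1), ((ap (i + 1) t) ^ 2 + (am (i + 1) t) ^ 2)) := by
  rw [split_sum (K - 1) (by omega), split_sum j hj]
  simp only [hm, and_true]
  ring

lemma cond_shift (K m m' : ℕ) (h : ∀ i : ℕ, i + 1 < m ↔ i < m') (ι : ℕ → ℝ)
    (lam : ℕ → ℝ → ℝ) (t : ℝ) :
    (∑ i ∈ Finset.Icc 1 (K - 1 - 1),
        if ι (i + 1) = ι (i + 1 + 1) ∧ i + 1 < m then lam (i + 1) t / lam (i + 1 + 1) t else 0)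
      = ∑ i ∈ Finset.Icc 1 (K - 1 - 1),
          if ι (i + 1) = ι (i + 1 + 1) ∧ i < m' then lam (i + 1) t / lam (i + 1 + 1) t else 0 :=
  Finset.sum_congr rfl fun i _ => if_congr (and_congr_right fun _ => h i) rfl rfl

/- ------------------------------------------------------------------ -/

theorem stmt_16 (K : ℕ) (hK : 2 ≤ K) (ι : ℕ → ℝ) (lam am ap : ℕ → ℝ → ℝ)
    (I : Set ℝ) (c₁ c₂ C₂ : ℝ) (hc₁ : 0 < c₁) (hc₂ : 0 < c₂) (hC₂ : 0 < C₂)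
    (hι : ∀ j, 1 ≤ j → j ≤ K → ι j = 1 ∨ ι j = -1)
    (hlam_pos : ∀ j, 1 ≤ j → j ≤ K → ∀ t ∈ I, 0 < lam j t)
    (hlam_cont : ∀ j, 1 ≤ j → j ≤ K → ContinuousOn (lam j) I)
    (ham_cont : ∀ j, 1 ≤ j → j ≤ K → ContinuousOn (am j) I)
    (hap_cont : ∀ j, 1 ≤ j → j ≤ K → ContinuousOn (ap j) I)
    (hign : IgnitionCondition K ι lam am ap I c₁ c₂ C₂)
    (hsmall : ∀ t ∈ I,
      (ι 1 * ι 2 + 1) / 2 * (lam 1 t / lam 2 t) + (am 1 t) ^ 2 + (ap 1 t) ^ 2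
        ≤ 1 / 2 * min 1 c₂ * (dpar K ι lam am ap t) ^ 2) :
    IgnitionCondition (K - 1) (fun i => ι (i + 1)) (fun i => lam (i + 1))
      (fun i => am (i + 1)) (fun i => ap (i + 1)) I
      (2 * c₁) (1 / 2 * min 1 c₂) (2 * C₂) := by
  intro t₁ t₂ h12 hsub t₀ ht₀ j hj1 hjK hyp
  beta_reduce at hyp ⊢
  rw [show K - 1 + 1 = K from by omega]
  set D' := dpar (K - 1) (fun i => ι (i + 1)) (fun i => lam (i + 1))
      (fun i => am (i + 1)) (fun i => ap (i + 1)) with hD'def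
  set D := dpar K ι lam am ap with hDdef
  have ht₁I : t₁ ∈ I := hsub (Set.left_mem_Icc.mpr h12)
  have ht₂I : t₂ ∈ I := hsub (Set.right_mem_Icc.mpr h12)
  have ht₀I : t₀ ∈ I := hsub ht₀
  have hlam_pos' : ∀ j', 1 ≤ j' → j' ≤ K - 1 → ∀ t ∈ I, 0 < lam (j' + 1) t :=
    fun j' h1 h2 t ht => hlam_pos (j' + 1) (by omega) (by omega) t ht
  -- squared identities
  have hDsq : ∀ t ∈ I, D t ^ 2 = Spar K ι lam am ap t :=
    fun t ht => dpar_sq K ι lam am ap t (fun j' h1 h2 => hlam_pos j' h1 h2 t ht)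
  have hD'sq : ∀ t ∈ I, D' t ^ 2 = Spar (K - 1) (fun i => ι (i + 1)) (fun i => lam (i + 1))
      (fun i => am (i + 1)) (fun i => ap (i + 1)) t :=
    fun t ht => dpar_sq _ _ _ _ _ t (fun j' h1 h2 => hlam_pos' j' h1 h2 t ht)
  have hEq : ∀ t ∈ I, D t ^ 2
      = ((if ι 1 = ι 2 then lam 1 t / lam 2 t else 0) + ((ap 1 t) ^ 2 + (am 1 t) ^ 2))
        + D' t ^ 2 := by
    intro t ht
    rw [hDsq t ht, hD'sq t ht, Spar_split K hK]
  -- the head term is controlled by the smallness assumption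
  have hsmall' : ∀ t ∈ I,
      (if ι 1 = ι 2 then lam 1 t / lam 2 t else 0) + ((ap 1 t) ^ 2 + (am 1 t) ^ 2)
        ≤ 1 / 2 * min 1 c₂ * D t ^ 2 := by
    intro t ht
    have hiota : (if ι 1 = ι 2 then lam 1 t / lam 2 t else 0)
        = (ι 1 * ι 2 + 1) / 2 * (lam 1 t / lam 2 t) := by
      rcases hι 1 (le_refl 1) (by omega) with h1 | h1 <;>
        rcases hι 2 (by omega) hK with h2 | h2 <;> rw [h1, h2] <;> norm_num
    rw [hiota]
    have := hsmall t ht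
    linarith
  have hEnn : ∀ t ∈ I,
      0 ≤ (if ι 1 = ι 2 then lam 1 t / lam 2 t else 0) + ((ap 1 t) ^ 2 + (am 1 t) ^ 2) := by
    intro t ht
    have h1 : (0:ℝ) ≤ lam 1 t / lam 2 t :=
      div_nonneg (hlam_pos 1 le_rfl (by omega) t ht).le (hlam_pos 2 (by omega) hK t ht).le
    have : (0:ℝ) ≤ if ι 1 = ι 2 then lam 1 t / lam 2 t else 0 := by
      split_ifs <;> simp [h1]
    positivity
  have hD'leD_sq : ∀ t ∈ I, D' t ^ 2 ≤ D t ^ 2 := by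
    intro t ht
    have := hEq t ht
    have := hEnn t ht
    linarith
  have hD'leD : ∀ t ∈ I, D' t ≤ D t := by
    intro t ht
    have h1 := hD'leD_sq t ht
    have h2 : 0 ≤ D t := Real.sqrt_nonneg _
    have h3 : 0 ≤ D' t := Real.sqrt_nonneg _
    nlinarith
  have hDsq_le : ∀ t ∈ I, D t ^ 2 ≤ 2 * D' t ^ 2 := by
    intro t ht
    have h1 := hEq t ht
    have h2 := hsmall' t ht
    have h3 : min 1 c₂ * D t ^ 2 ≤ 1 * D t ^ 2 :=
      mul_le_mul_of_nonneg_right (min_le_left 1 c₂) (sq_nonneg _)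
    linarith
  have hDle2 : ∀ t ∈ I, D t ≤ 2 * D' t := by
    intro t ht
    have h1 := hDsq_le t ht
    have h2 : 0 ≤ D t := Real.sqrt_nonneg _
    have h3 : 0 ≤ D' t := Real.sqrt_nonneg _
    nlinarith [sq_nonneg (D' t)]
  -- continuity / integrability
  have hcD : ContinuousOn D I := dpar_contOn K ι lam am ap I hlam_pos hlam_cont ham_cont hap_cont
  have hcD' : ContinuousOn D' I := by
    apply dpar_contOn (K - 1) (fun i => ι (i + 1)) (fun i => lam (i + 1))
      (fun i => am (i + 1)) (fun i => ap (i + 1)) I hlam_pos'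
    · exact fun j' h1 h2 => hlam_cont (j' + 1) (by omega) (by omega)
    · exact fun j' h1 h2 => ham_cont (j' + 1) (by omega) (by omega)
    · exact fun j' h1 h2 => hap_cont (j' + 1) (by omega) (by omega)
  have hsub1 : Icc t₁ t₀ ⊆ I := fun x hx => hsub ⟨hx.1, le_trans hx.2 ht₀.2⟩
  have hsub2 : Icc t₀ t₂ ⊆ I := fun x hx => hsub ⟨le_trans ht₀.1 hx.1, hx.2⟩
  -- conversion of the conclusion
  have final : ((∫ t in t₁..t₀, D t) ≤ C₂ * D t₁ * lam K t₁
        ∨ (∫ t in t₀..t₂, D t) ≤ C₂ * D t₂ * lam K t₂) →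
      ((∫ t in t₁..t₀, D' t) ≤ 2 * C₂ * D' t₁ * lam K t₁
        ∨ (∫ t in t₀..t₂, D' t) ≤ 2 * C₂ * D' t₂ * lam K t₂) := by
    rintro (h | h)
    · left
      have hi1 : IntervalIntegrable D' MeasureTheory.volume t₁ t₀ := by
        apply ContinuousOn.intervalIntegrable
        rw [Set.uIcc_of_le ht₀.1]; exact hcD'.mono hsub1
      have hi2 : IntervalIntegrable D MeasureTheory.volume t₁ t₀ := by
        apply ContinuousOn.intervalIntegrable
        rw [Set.uIcc_of_le ht₀.1]; exact hcD.mono hsub1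
      have hmono := intervalIntegral.integral_mono_on ht₀.1 hi1 hi2
        (fun x hx => hD'leD x (hsub1 hx))
      have hlt : 0 < lam K t₁ := hlam_pos K (by omega) le_rfl t₁ ht₁I
      have h2 : C₂ * D t₁ * lam K t₁ ≤ 2 * C₂ * D' t₁ * lam K t₁ := by
        have := hDle2 t₁ ht₁I
        nlinarith [mul_nonneg hC₂.le hlt.le]
      linarith
    · right
      have hi1 : IntervalIntegrable D' MeasureTheory.volume t₀ t₂ := by
        apply ContinuousOn.intervalIntegrable
        rw [Set.uIcc_of_le ht₀.2]; exact hcD'.mono hsub2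
      have hi2 : IntervalIntegrable D MeasureTheory.volume t₀ t₂ := by
        apply ContinuousOn.intervalIntegrable
        rw [Set.uIcc_of_le ht₀.2]; exact hcD.mono hsub2
      have hmono := intervalIntegral.integral_mono_on ht₀.2 hi1 hi2
        (fun x hx => hD'leD x (hsub2 hx))
      have hlt : 0 < lam K t₂ := hlam_pos K (by omega) le_rfl t₂ ht₂I
      have h2 : C₂ * D t₂ * lam K t₂ ≤ 2 * C₂ * D' t₂ * lam K t₂ := by
        have := hDle2 t₂ ht₂I
        nlinarith [mul_nonneg hC₂.le hlt.le]
      linarith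
  -- now apply the original ignition condition at index j+1
  rcases hyp with ⟨hsum, hig⟩ | ⟨hsum, hj2, hig⟩
  · -- case (i)
    have hprem : ∀ t ∈ Set.Icc t₁ t₂,
        (∑ i ∈ Finset.Icc 1 (K - 1),
            if ι i = ι (i + 1) ∧ i < j + 1 then lam i t / lam (i + 1) t else 0)
          + ∑ i ∈ Finset.Icc 1 (j + 1 - 1), ((ap i t) ^ 2 + (am i t) ^ 2)
        ≤ c₂ * D t ^ 2 := by
      intro t ht
      have htI := hsub ht
      have h1 := hsum t ht
      rw [Nat.add_sub_cancel, head_split K (j + 1) j hK hj1 (by omega) ι lam am ap t,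
        cond_shift K (j + 1) j (fun i => by omega) ι lam t]
      have h2 := hsmall' t htI
      have h3 := hD'leD_sq t htI
      have h4 : min 1 c₂ * D' t ^ 2 ≤ min 1 c₂ * D t ^ 2 :=
        mul_le_mul_of_nonneg_left h3 (le_min zero_le_one hc₂.le)
      have h5 : min 1 c₂ * D t ^ 2 ≤ c₂ * D t ^ 2 :=
        mul_le_mul_of_nonneg_right (min_le_right 1 c₂) (sq_nonneg _)
      linarith
    have hig' : c₁ * D t₀ ^ 2 ≤ (ap (j + 1) t₀) ^ 2 + (am (j + 1) t₀) ^ 2 := by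
      have h3 := hDsq_le t₀ ht₀I
      nlinarith [hc₁.le]
    exact final (hign t₁ t₂ h12 hsub t₀ ht₀ (j + 1) (by omega) (by omega)
      (Or.inl ⟨hprem, hig'⟩))
  · -- case (ii)
    have hprem : ∀ t ∈ Set.Icc t₁ t₂,
        (∑ i ∈ Finset.Icc 1 (K - 1),
            if ι i = ι (i + 1) ∧ i < j + 1 - 1 then lam i t / lam (i + 1) t else 0)
          + ∑ i ∈ Finset.Icc 1 (j + 1 - 1), ((ap i t) ^ 2 + (am i t) ^ 2)
        ≤ c₂ * D t ^ 2 := by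
      intro t ht
      have htI := hsub ht
      have h1 := hsum t ht
      rw [Nat.add_sub_cancel, head_split K j j hK hj1 (by omega) ι lam am ap t,
        cond_shift K j (j - 1) (fun i => by omega) ι lam t]
      have h2 := hsmall' t htI
      have h3 := hD'leD_sq t htI
      have h4 : min 1 c₂ * D' t ^ 2 ≤ min 1 c₂ * D t ^ 2 :=
        mul_le_mul_of_nonneg_left h3 (le_min zero_le_one hc₂.le)
      have h5 : min 1 c₂ * D t ^ 2 ≤ c₂ * D t ^ 2 :=
        mul_le_mul_of_nonneg_right (min_le_right 1 c₂) (sq_nonneg _)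
      linarith
    have hig' : c₁ * D t₀ ^ 2
        ≤ ι (j + 1 - 1) * ι (j + 1) * (lam (j + 1 - 1) t₀ / lam (j + 1) t₀) := by
      rw [Nat.add_sub_cancel]
      rw [show j - 1 + 1 = j from by omega] at hig
      have h3 := hDsq_le t₀ ht₀I
      nlinarith [hc₁.le]
    exact final (hign t₁ t₂ h12 hsub t₀ ht₀ (j + 1) (by omega) (by omega)
      (Or.inr ⟨hprem, by omega, hig'⟩))
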